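/- Let K be a finite extension of Q_p and let g : R → K^n be a nonconstant map given by power series converging on the valuation ring R. Then the limit as r → 0 of the secant lines ℓ_r through g(0) and g(r) exists in P^{n−1}(K), the limit of the tangent lines ℓ'_r = {g(r) + λ·g'(r) : λ ∈ K} exists, and the two limits coincide (p-adic Whitney lemma). -/

import Mathlib

open Filter Topology

lemma pi_ultra {ι K : Type*} [Fintype ι] [SeminormedAddCommGroup K]
    [IsUltrametricDist K] : IsUltrametricDist (ι → K) := by
  constructor
  intro x y z
  rcases isEmpty_or_nonempty ι with h | h
  · simp [dist_pi_def]
  rw [dist_pi_le_iff (le_trans dist_nonneg (le_max_left _ _))]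
  intro i
  exact le_trans (IsUltrametricDist.dist_triangle_max (x i) (y i) (z i))
    (max_le_max (dist_le_pi_dist x y i) (dist_le_pi_dist y z i))

lemma tendsto_of_norm_sub_le {E K : Type*} [NormedAddCommGroup E] [NormedField K]
    {S : Set K} {F : K → E} {v : E} {D : ℝ}
    (h : ∀ r ∈ S, ‖F r - v‖ ≤ D * ‖r‖) :
    Filter.Tendsto F (𝓝[S] 0) (𝓝 v) := by
  rw [tendsto_iff_norm_sub_tendsto_zero]
  have hD : Tendsto (fun r : K => D * ‖r‖) (𝓝[S] (0:K)) (𝓝 0) := by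
    have : Tendsto (fun r : K => D * ‖r‖) (𝓝 (0:K)) (𝓝 (D * ‖(0:K)‖)) :=
      (continuous_const.mul continuous_norm).tendsto 0
    simpa using this.mono_left nhdsWithin_le_nhds
  refine squeeze_zero' ?_ ?_ hD
  · exact Eventually.of_forall fun r => norm_nonneg _
  · exact eventually_mem_nhdsWithin.mono fun r hr => h r hr

/-- p-adic Whitney lemma: for a nonconstant power-series map `g : R → K^n`
with derivative `g'`, the directions of the secant lines through `g 0` and `g r`
and of the tangent lines at `g r` both converge as `r → 0`, to a common nonzero
vector `v` (so the limit secant and tangent lines both exist and coincide: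
they are the line spanned by `v`). -/
theorem stmt_8 {p : ℕ} [Fact (Nat.Prime p)] (K : Type*) [NormedField K]
    [Algebra ℚ_[p] K] [FiniteDimensional ℚ_[p] K] [IsUltrametricDist K]
    (hext : ∀ x : ℚ_[p], ‖algebraMap ℚ_[p] K x‖ = ‖x‖)
    (n : ℕ) (a : ℕ → Fin n → K) (g g' : K → Fin n → K)
    (hg : ∀ r : K, ‖r‖ ≤ 1 → HasSum (fun j : ℕ => r ^ j • a j) (g r))
    (hg' : ∀ r : K, ‖r‖ ≤ 1 →
      HasSum (fun j : ℕ => ((j : K) + 1) • (r ^ j • a (j + 1))) (g' r))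
    (k : ℕ) (hk1 : 1 ≤ k) (hak : a k ≠ 0)
    (hmin : ∀ j : ℕ, 0 < j → j < k → a j = 0) :
    ∃ v : Fin n → K, v ≠ 0 ∧
      Tendsto (fun r : K => (r ^ k)⁻¹ • (g r - g 0))
        (𝓝[{r : K | r ≠ 0 ∧ ‖r‖ ≤ 1}] 0) (𝓝 v) ∧
      Tendsto (fun r : K => ((k : K) * r ^ (k - 1))⁻¹ • g' r)
        (𝓝[{r : K | r ≠ 0 ∧ ‖r‖ ≤ 1}] 0) (𝓝 v) := by
  haveI : IsUltrametricDist (Fin n → K) := pi_ultra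
  haveI : CharZero K := charZero_of_injective_algebraMap (algebraMap ℚ_[p] K).injective
  obtain ⟨m, rfl⟩ : ∃ m, k = m + 1 := ⟨k - 1, (Nat.succ_pred_eq_of_pos hk1).symm⟩
  set k := m + 1 with hkdef
  have hkK : (k : K) ≠ 0 := Nat.cast_ne_zero.2 (by omega)
  -- norms of natural numbers in K are at most 1
  have hnat : ∀ j : ℕ, ‖(j : K)‖ ≤ 1 := by
    intro j
    have : ((j : ℚ_[p]) : ℚ_[p]) = (j : ℚ_[p]) := rfl
    calc ‖(j : K)‖ = ‖algebraMap ℚ_[p] K (j : ℚ_[p])‖ := by rw [map_natCast]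
      _ = ‖(j : ℚ_[p])‖ := hext _
      _ ≤ 1 := by
          have := Padic.norm_int_le_one (p := p) (j : ℤ)
          simpa using this
  -- a bound on the coefficients
  have hsum1 : HasSum a (g 1) := by simpa using hg 1 (by simp)
  obtain ⟨C, hC⟩ : ∃ C, ∀ j, ‖a j‖ ≤ C := by
    have := (hsum1.summable.tendsto_atTop_zero.norm).bddAbove_range
    obtain ⟨C, hC⟩ := this
    exact ⟨C, fun j => hC (Set.mem_range_self j)⟩
  have hC0 : 0 ≤ C := le_trans (norm_nonneg _) (hC 0)
  -- value at 0
  have hg0 : g 0 = a 0 := by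
    have h0 : HasSum (fun j : ℕ => (0:K) ^ j • a j) (g 0) := hg 0 (by simp)
    have h1 : HasSum (fun j : ℕ => (0:K) ^ j • a j) (a 0) := by
      have : (fun j : ℕ => (0:K) ^ j • a j) =
          (fun j : ℕ => if j = 0 then a 0 else 0) := by
        funext j
        cases j with
        | zero => simp
        | succ i => simp [pow_succ]
      rw [this]
      exact hasSum_ite_eq 0 (a 0)
    exact h0.unique h1
  refine ⟨a k, hak, ?_, ?_⟩
  · -- secant direction
    apply tendsto_of_norm_sub_le (D := C)
    rintro r ⟨hr0, hr1⟩
    have hrn : (0:ℝ) < ‖r‖ := norm_pos_iff.2 hr0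
    have h := hg r hr1
    have h2 := (h.sub (hasSum_ite_eq 0 (a 0))).sub (hasSum_ite_eq k (r ^ k • a k))
    -- bound each term
    have hb : ∀ j : ℕ, ‖(r ^ j • a j - (if j = 0 then a 0 else 0))
        - (if j = k then r ^ k • a k else 0)‖ ≤ C * ‖r‖ ^ (k + 1) := by
      intro j
      have hnn : 0 ≤ C * ‖r‖ ^ (k + 1) := mul_nonneg hC0 (pow_nonneg (norm_nonneg r) _)
      rcases eq_or_ne j 0 with rfl | hj0
      · simp [hkdef, hnn]; exact hnn
      rcases eq_or_ne j k with rfl | hjk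
      · simp [hkdef, hnn]; exact hnn
      rcases lt_or_ge j k with hjl | hjg
      · have : a j = 0 := hmin j (Nat.pos_of_ne_zero hj0) hjl
        simp [hj0, hjk, this, hnn]
      · have hjk1 : k + 1 ≤ j := lt_of_le_of_ne hjg (Ne.symm hjk)
        simp only [if_neg hj0, if_neg hjk, sub_zero]
        rw [norm_smul, norm_pow]
        calc ‖r‖ ^ j * ‖a j‖ ≤ ‖r‖ ^ (k + 1) * C := by
              apply mul_le_mul _ (hC j) (norm_nonneg _) (pow_nonneg (norm_nonneg r) _)
              exact pow_le_pow_of_le_one (norm_nonneg r) hr1 hjk1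
          _ = C * ‖r‖ ^ (k + 1) := mul_comm _ _
    have hbound : ‖g r - a 0 - r ^ k • a k‖ ≤ C * ‖r‖ ^ (k + 1) := by
      rw [← h2.tsum_eq]
      exact IsUltrametricDist.norm_tsum_le_of_forall_le_of_nonneg
        (mul_nonneg hC0 (pow_nonneg (norm_nonneg r) _)) hb
    have hrk : r ^ k ≠ 0 := pow_ne_zero _ hr0
    have key : (r ^ k)⁻¹ • (g r - g 0) - a k
        = (r ^ k)⁻¹ • (g r - a 0 - r ^ k • a k) := by
      rw [hg0, smul_sub ((r ^ k)⁻¹) (g r - a 0) (r ^ k • a k), smul_smul,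
        inv_mul_cancel₀ hrk, one_smul]
    rw [key, norm_smul, norm_inv, norm_pow]
    calc (‖r‖ ^ k)⁻¹ * ‖g r - a 0 - r ^ k • a k‖
        ≤ (‖r‖ ^ k)⁻¹ * (C * ‖r‖ ^ (k + 1)) := by
          apply mul_le_mul_of_nonneg_left hbound
          positivity
      _ = C * ‖r‖ := by field_simp [pow_succ]; ring
  · -- tangent direction
    have hkKpos : (0:ℝ) < ‖(k : K)‖ := norm_pos_iff.2 hkK
    apply tendsto_of_norm_sub_le (D := C / ‖(k : K)‖)
    rintro r ⟨hr0, hr1⟩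
    have hrn : (0:ℝ) < ‖r‖ := norm_pos_iff.2 hr0
    have h := hg' r hr1
    have h2 := h.sub (hasSum_ite_eq m (((m : K) + 1) • (r ^ m • a (m + 1))))
    have hb : ∀ j : ℕ, ‖((j : K) + 1) • (r ^ j • a (j + 1))
        - (if j = m then ((m : K) + 1) • (r ^ m • a (m + 1)) else 0)‖
        ≤ C * ‖r‖ ^ (m + 1) := by
      intro j
      have hnn : 0 ≤ C * ‖r‖ ^ (m + 1) := mul_nonneg hC0 (pow_nonneg (norm_nonneg r) _)
      rcases eq_or_ne j m with rfl | hjm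
      · simp [hnn]
      rcases lt_or_ge j m with hjl | hjg
      · have : a (j + 1) = 0 := hmin (j + 1) (Nat.succ_pos j) (by omega)
        simp [hjm, this, hnn]
      · have hjm1 : m + 1 ≤ j := lt_of_le_of_ne hjg (Ne.symm hjm)
        simp only [if_neg hjm, sub_zero]
        rw [norm_smul, norm_smul, norm_pow]
        have h1 : ‖(j : K) + 1‖ ≤ 1 := by
          have := hnat (j + 1); push_cast at this; simpa using this
        calc ‖(j : K) + 1‖ * (‖r‖ ^ j * ‖a (j + 1)‖)
            ≤ 1 * (‖r‖ ^ j * ‖a (j + 1)‖) := by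
              apply mul_le_mul_of_nonneg_right h1
              positivity
          _ = ‖r‖ ^ j * ‖a (j + 1)‖ := one_mul _
          _ ≤ ‖r‖ ^ (m + 1) * C := by
              apply mul_le_mul _ (hC _) (norm_nonneg _) (pow_nonneg (norm_nonneg r) _)
              exact pow_le_pow_of_le_one (norm_nonneg r) hr1 hjm1
          _ = C * ‖r‖ ^ (m + 1) := mul_comm _ _
    have hbound : ‖g' r - ((m : K) + 1) • (r ^ m • a (m + 1))‖ ≤ C * ‖r‖ ^ (m + 1) := by
      rw [← h2.tsum_eq]
      exact IsUltrametricDist.norm_tsum_le_of_forall_le_of_nonneg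
        (mul_nonneg hC0 (pow_nonneg (norm_nonneg r) _)) hb
    have hrm : r ^ m ≠ 0 := pow_ne_zero _ hr0
    have hcast : ((k : K)) = (m : K) + 1 := by push_cast [hkdef]; ring
    have hk1' : k - 1 = m := by omega
    have hm0 : ((m : K) + 1) ≠ 0 := by rw [← hcast]; exact hkK
    have hsc : ((((m : K) + 1) * r ^ m)⁻¹ * (((m : K) + 1) * r ^ m)) = 1 :=
      inv_mul_cancel₀ (mul_ne_zero hm0 hrm)
    have hinner : (((m : K) + 1) * r ^ m)⁻¹ • (((m : K) + 1) • r ^ m • a (m + 1))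
        = a (m + 1) := by
      rw [smul_smul ((m : K) + 1) (r ^ m), smul_smul, hsc, one_smul]
    have key : ((k : K) * r ^ (k - 1))⁻¹ • g' r - a k
        = ((k : K) * r ^ m)⁻¹ • (g' r - ((m : K) + 1) • (r ^ m • a (m + 1))) := by
      rw [hk1', hcast, smul_sub]
      congr 1
      exact hinner.symm
    rw [key, norm_smul, norm_inv, norm_mul, norm_pow]
    calc (‖(k : K)‖ * ‖r‖ ^ m)⁻¹ * ‖g' r - ((m : K) + 1) • (r ^ m • a (m + 1))‖
        ≤ (‖(k : K)‖ * ‖r‖ ^ m)⁻¹ * (C * ‖r‖ ^ (m + 1)) := by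
          apply mul_le_mul_of_nonneg_left hbound
          positivity
      _ = C / ‖(k : K)‖ * ‖r‖ := by field_simp [pow_succ]; ring
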